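/- Let GC(G,S,α) be a generalized Cayley graph over a finite group G with S nonempty. Then GC(G,S,α) is connected if and only if either (i) S is not contained in any right coset of any proper subgroup of G, or (ii) S ⊆ Hg for some g ∉ H with H = ⟨SS⁻¹⟩ a proper subgroup satisfying [G:H] = 2 and α(H) = H. -/

import Mathlib

open Subgroup

section
variable {G : Type*} [Group G] [Finite G]

set_option linter.unusedSectionVars false

theorem aux_walk {Γ : SimpleGraph G} {C : Set G}
    (hC : ∀ ⦃x y : G⦄, x ∈ C → Γ.Adj x y → y ∈ C) :
    ∀ {u x : G}, Γ.Walk u x → u ∈ C → x ∈ C := by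
  intro u x w
  induction w with
  | nil => exact id
  | cons h p ih => exact fun hu => ih (hC hu h)

theorem aux_conn (α : G ≃* G) (hinv : ∀ g : G, α (α g) = g) (S : Set G)
    (hS2 : (fun s => α s⁻¹) '' S = S)
    (Γ : SimpleGraph G) (hΓ : ∀ x y : G, Γ.Adj x y ↔ α x⁻¹ * y ∈ S) :
    Γ.Connected ↔ ∀ x : G,
      x ∈ Subgroup.closure {u : G | ∃ a ∈ S, ∃ b ∈ S, u = a⁻¹ * b} ∨
      ∃ k ∈ Subgroup.closure {u : G | ∃ a ∈ S, ∃ b ∈ S, u = a⁻¹ * b},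
        ∃ s ∈ S, x = α k * s := by
  set T2 : Set G := {u : G | ∃ a ∈ S, ∃ b ∈ S, u = a⁻¹ * b} with hT2
  set K := Subgroup.closure T2 with hKdef
  have hmemS : ∀ s ∈ S, α s⁻¹ ∈ S := by
    intro s hs
    rw [← hS2]
    exact ⟨s, hs, rfl⟩
  set C : Set G := {x : G | x ∈ K ∨ ∃ k ∈ K, ∃ s ∈ S, x = α k * s} with hCdef
  -- two step reachability
  have step2 : ∀ (p a b : G), a ∈ S → b ∈ S → Γ.Reachable p (p * (a⁻¹ * b)) := by
    intro p a b ha hb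
    have h1 : Γ.Adj p (α p * α a⁻¹) := by
      rw [hΓ, map_inv, inv_mul_cancel_left]
      exact hmemS a ha
    have h2 : Γ.Adj (α p * α a⁻¹) (p * (a⁻¹ * b)) := by
      rw [hΓ]
      have key : α (α p * α a⁻¹)⁻¹ * (p * (a⁻¹ * b)) = b := by
        rw [map_inv, map_mul, hinv, hinv]; group
      rw [key]; exact hb
    exact h1.reachable.trans h2.reachable
  -- every element of K is reachable from 1
  have listlem : ∀ l : List G, (∀ y ∈ l, y ∈ T2) → ∀ p : G,
      Γ.Reachable 1 p → Γ.Reachable 1 (p * l.prod) := by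
    intro l
    induction l with
    | nil => intro _ p hp; simpa using hp
    | cons y l ih =>
      intro hmem p hp
      obtain ⟨a, ha, b, hb, rfl⟩ := hmem y (List.mem_cons_self (a := y) (l := l))
      rw [List.prod_cons, ← mul_assoc]
      exact ih (fun z hz => hmem z (List.mem_cons_of_mem _ hz)) _
        (hp.trans (step2 p a b ha hb))
  have memK_reach : ∀ x ∈ K, Γ.Reachable 1 x := by
    intro x hx
    rw [hKdef, ← Subgroup.mem_toSubmonoid, Subgroup.closure_toSubmonoid] at hx
    obtain ⟨l, hl, rfl⟩ := Submonoid.exists_list_of_mem_closure hx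
    have hl' : ∀ y ∈ l, y ∈ T2 := by
      intro y hy
      rcases hl y hy with h | h
      · exact h
      · rw [Set.mem_inv] at h
        obtain ⟨a, ha, b, hb, hab⟩ := h
        exact ⟨b, hb, a, ha, by rw [← inv_inv y, hab]; group⟩
    simpa using listlem l hl' 1 (SimpleGraph.Reachable.refl 1)
  -- C is closed under adjacency
  have hCadj : ∀ ⦃x y : G⦄, x ∈ C → Γ.Adj x y → y ∈ C := by
    intro x y hx hxy
    have hs : α x⁻¹ * y ∈ S := (hΓ x y).mp hxy
    have hy : y = α x * (α x⁻¹ * y) := by rw [map_inv]; group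
    rcases hx with hx | ⟨k, hk, s, hsS, rfl⟩
    · exact Or.inr ⟨x, hx, α x⁻¹ * y, hs, hy⟩
    · left
      have hy2 : y = k * ((α s⁻¹)⁻¹ * (α (α k * s)⁻¹ * y)) := by
        simp only [map_inv, map_mul, hinv, inv_inv]; group
      rw [hy2]
      exact mul_mem hk (subset_closure ⟨α s⁻¹, hmemS s hsS, _, hs, rfl⟩)
  -- every element of C is reachable from 1
  have hCreach : ∀ x ∈ C, Γ.Reachable 1 x := by
    rintro x (hx | ⟨k, hk, s, hsS, rfl⟩)
    · exact memK_reach x hx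
    · refine (memK_reach k hk).trans (SimpleGraph.Adj.reachable ?_)
      rw [hΓ, map_inv, inv_mul_cancel_left]
      exact hsS
  constructor
  · intro hc x
    have hr : Γ.Reachable 1 x := hc.preconnected 1 x
    obtain ⟨w⟩ := hr
    exact aux_walk hCadj w (Or.inl (one_mem K))
  · intro hC
    have hpre : Γ.Preconnected := fun u v =>
      (hCreach u (hC u)).symm.trans (hCreach v (hC v))
    exact (SimpleGraph.connected_iff Γ).mpr ⟨hpre, ⟨1⟩⟩

end

theorem stmt_13 {G : Type*} [Group G] [Finite G] (α : G ≃* G)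
    (hinv : ∀ g : G, α (α g) = g) (S : Set G) (hne : S.Nonempty)
    (hS1 : S ∩ {x : G | ∃ g : G, x = α g⁻¹ * g} = ∅)
    (hS2 : (fun s => α s⁻¹) '' S = S)
    (Γ : SimpleGraph G) (hΓ : ∀ x y : G, Γ.Adj x y ↔ α x⁻¹ * y ∈ S) :
    Γ.Connected ↔
      ((¬ ∃ (H : Subgroup G) (g : G), H ≠ ⊤ ∧ S ⊆ {x : G | ∃ h ∈ H, x = h * g}) ∨
        (∃ g : G, g ∉ Subgroup.closure {u : G | ∃ a ∈ S, ∃ b ∈ S, u = a * b⁻¹} ∧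
          S ⊆ {x : G | ∃ h ∈ Subgroup.closure {u : G | ∃ a ∈ S, ∃ b ∈ S, u = a * b⁻¹}, x = h * g} ∧
          Subgroup.closure {u : G | ∃ a ∈ S, ∃ b ∈ S, u = a * b⁻¹} ≠ ⊤ ∧
          (Subgroup.closure {u : G | ∃ a ∈ S, ∃ b ∈ S, u = a * b⁻¹}).index = 2 ∧
          (⇑α) '' ↑(Subgroup.closure {u : G | ∃ a ∈ S, ∃ b ∈ S, u = a * b⁻¹}) =
            ↑(Subgroup.closure {u : G | ∃ a ∈ S, ∃ b ∈ S, u = a * b⁻¹}))) := by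
  classical
  obtain ⟨s₀, hs₀⟩ := hne
  have hmemS : ∀ s ∈ S, α s⁻¹ ∈ S := by
    intro s hs; rw [← hS2]; exact ⟨s, hs, rfl⟩
  set T1 : Set G := {u : G | ∃ a ∈ S, ∃ b ∈ S, u = a * b⁻¹} with hT1
  set T2 : Set G := {u : G | ∃ a ∈ S, ∃ b ∈ S, u = a⁻¹ * b} with hT2
  set H := Subgroup.closure T1 with hHdef
  set K := Subgroup.closure T2 with hKdef
  -- α maps T1 onto T2 and vice versa
  have hαT1 : ⇑α '' T1 = T2 := by
    ext u
    constructor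
    · rintro ⟨v, ⟨a, ha, b, hb, rfl⟩, rfl⟩
      refine ⟨α a⁻¹, hmemS a ha, α b⁻¹, hmemS b hb, ?_⟩
      simp only [map_mul, map_inv, inv_inv]
    · rintro ⟨a, ha, b, hb, rfl⟩
      refine ⟨α a⁻¹ * (α b⁻¹)⁻¹, ⟨α a⁻¹, hmemS a ha, α b⁻¹, hmemS b hb, rfl⟩, ?_⟩
      simp only [map_mul, map_inv, hinv, inv_inv]
  have hαT2 : ⇑α '' T2 = T1 := by
    ext u
    constructor
    · rintro ⟨v, ⟨a, ha, b, hb, rfl⟩, rfl⟩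
      refine ⟨α a⁻¹, hmemS a ha, α b⁻¹, hmemS b hb, ?_⟩
      simp only [map_mul, map_inv, inv_inv]
    · rintro ⟨a, ha, b, hb, rfl⟩
      refine ⟨(α a⁻¹)⁻¹ * α b⁻¹, ⟨α a⁻¹, hmemS a ha, α b⁻¹, hmemS b hb, rfl⟩, ?_⟩
      simp only [map_mul, map_inv, hinv, inv_inv]
  have hmapHK : H.map α.toMonoidHom = K := by
    rw [hHdef, MonoidHom.map_closure]
    exact congrArg _ hαT1
  have hmapKH : K.map α.toMonoidHom = H := by
    rw [hKdef, MonoidHom.map_closure]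
    exact congrArg _ hαT2
  have hSH : ∀ s ∈ S, s * s₀⁻¹ ∈ H := fun s hs => subset_closure ⟨s, hs, s₀, hs₀, rfl⟩
  have hSsub : S ⊆ {x : G | ∃ h ∈ H, x = h * s₀} :=
    fun s hs => ⟨s * s₀⁻¹, hSH s hs, by group⟩
  rw [aux_conn α hinv S hS2 Γ hΓ]
  by_cases hKtop : K = ⊤
  · -- connected, and (i) holds
    have hcond : ∀ x : G, x ∈ K ∨ ∃ k ∈ K, ∃ s ∈ S, x = α k * s :=
      fun x => Or.inl (hKtop ▸ Subgroup.mem_top x)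
    constructor
    · intro _
      left
      rintro ⟨H', g, hH'top, hsub⟩
      have hmap : K.map (MulAut.conj g).toMonoidHom ≤ H' := by
        rw [hKdef, MonoidHom.map_closure]
        apply (Subgroup.closure_le _).mpr
        rintro u ⟨v, ⟨a, ha, b, hb, rfl⟩, rfl⟩
        obtain ⟨h₁, hh₁, rfl⟩ := hsub ha
        obtain ⟨h₂, hh₂, rfl⟩ := hsub hb
        simp only [MulEquiv.coe_toMonoidHom, MulAut.conj_apply]
        have heq : g * ((h₁ * g)⁻¹ * (h₂ * g)) * g⁻¹ = h₁⁻¹ * h₂ := by group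
        rw [heq]
        exact mul_mem (inv_mem hh₁) hh₂
      rw [hKtop, Subgroup.map_top_of_surjective _ (MulEquiv.surjective _)] at hmap
      exact hH'top (top_le_iff.mp hmap)
    · exact fun _ => hcond
  · -- K proper
    have hHtop : H ≠ ⊤ := by
      intro h
      apply hKtop
      rw [← hmapHK, h, Subgroup.map_top_of_surjective _ α.surjective]
    constructor
    · intro hconn
      right
      -- the covering property
      have hαKH : ⇑α '' (K : Set G) = (H : Set G) := by
        rw [← hmapKH, Subgroup.coe_map]; rfl
      have hcov : ∀ x : G, x ∈ K ∨ ∃ h ∈ H, x = h * s₀ := by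
        intro x
        rcases hconn x with hx | ⟨k, hk, s, hs, rfl⟩
        · exact Or.inl hx
        · right
          have hαk : α k ∈ H := by
            rw [← hmapKH]
            exact ⟨k, hk, rfl⟩
          obtain ⟨h, hh, rfl⟩ := hSsub hs
          exact ⟨α k * h, mul_mem hαk hh, by group⟩
      -- cardinalities
      have hcardKH : (H : Set G).ncard = (K : Set G).ncard := by
        rw [← hαKH, Set.ncard_image_of_injective _ α.injective]
      have hle2 : Nat.card G ≤ 2 * Nat.card H := by
        have hsub2 : (Set.univ : Set G) ⊆ (K : Set G) ∪ (fun h => h * s₀) '' (H : Set G) := by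
          intro x _
          rcases hcov x with hx | ⟨h, hh, rfl⟩
          · exact Or.inl hx
          · exact Or.inr ⟨h, hh, rfl⟩
        calc Nat.card G = (Set.univ : Set G).ncard := (Set.ncard_univ G).symm
          _ ≤ ((K : Set G) ∪ (fun h => h * s₀) '' (H : Set G)).ncard :=
              Set.ncard_le_ncard hsub2 (Set.toFinite _)
          _ ≤ (K : Set G).ncard + ((fun h => h * s₀) '' (H : Set G)).ncard :=
              Set.ncard_union_le _ _
          _ = (H : Set G).ncard + (H : Set G).ncard := by
              rw [Set.ncard_image_of_injective _ (mul_left_injective s₀), ← hcardKH]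
          _ = 2 * Nat.card H := by
              have hHn : (H : Set G).ncard = Nat.card H := (Nat.card_coe_set_eq _).symm
              rw [hHn, two_mul]
      have hidx2 : H.index = 2 := by
        have h1 : H.index * Nat.card H = Nat.card G := Subgroup.index_mul_card H
        have hpos : 0 < Nat.card H := Nat.card_pos
        have hle : H.index ≤ 2 := by
          by_contra hgt
          push_neg at hgt
          have : 3 * Nat.card H ≤ H.index * Nat.card H := Nat.mul_le_mul_right _ hgt
          omega
        have hne1 : H.index ≠ 1 := fun h => hHtop (Subgroup.index_eq_one.mp h)
        have hne0 : H.index ≠ 0 := Subgroup.index_ne_zero_of_finite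
        omega
      have hKle : K ≤ H := by
        rw [hKdef]
        apply (Subgroup.closure_le _).mpr
        rintro u ⟨a, ha, b, hb, rfl⟩
        have hba : b * a⁻¹ ∈ H := subset_closure ⟨b, hb, a, ha, rfl⟩
        rw [SetLike.mem_coe, Subgroup.mul_mem_iff_of_index_two hidx2]
        rw [Subgroup.mul_mem_iff_of_index_two hidx2] at hba
        exact hba.symm
      have hKH : K = H := by
        apply SetLike.coe_injective
        exact Set.eq_of_subset_of_ncard_le hKle hcardKH.le (Set.toFinite _)
      have hs₀H : s₀ ∉ H := by
        intro hmem
        apply hHtop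
        rw [eq_top_iff]
        intro x _
        rcases hcov x with hx | ⟨h, hh, rfl⟩
        · exact hKH ▸ hx
        · exact mul_mem hh hmem
      refine ⟨s₀, hs₀H, hSsub, hHtop, hidx2, ?_⟩
      rw [← hKH] at hαKH ⊢
      exact hαKH
    · rintro (hi | ⟨g, hgH, hSg, _, hidx2, hαH⟩)
      · exact absurd ⟨H, s₀, hHtop, hSsub⟩ hi
      · -- condition (ii) implies connectivity
        have hKH : K = H := by
          apply SetLike.coe_injective
          rw [← hmapHK, Subgroup.coe_map]
          exact hαH
        have hs₀H : s₀ ∉ H := by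
          obtain ⟨h, hh, hs₀eq⟩ := hSg hs₀
          intro hmem
          apply hgH
          have : h⁻¹ * s₀ ∈ H := mul_mem (inv_mem hh) hmem
          rwa [hs₀eq, inv_mul_cancel_left] at this
        intro x
        by_cases hx : x ∈ H
        · exact Or.inl (by show x ∈ K; rw [hKH]; exact hx)
        · right
          have hxs : x * s₀⁻¹ ∈ H := by
            rw [Subgroup.mul_mem_iff_of_index_two hidx2]
            simp only [inv_mem_iff]
            exact iff_of_false hx hs₀H
          refine ⟨α (x * s₀⁻¹), ?_, s₀, hs₀, ?_⟩
          · show α (x * s₀⁻¹) ∈ K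
            rw [hKH, ← SetLike.mem_coe, ← hαH]
            exact ⟨x * s₀⁻¹, hxs, rfl⟩
          · rw [hinv]; group
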